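/- In the conservative value iteration algorithm with Bernstein penalties, on the good event E (where empirical transition and reward estimates are within their Bernstein confidence intervals), the iterates satisfy V̂_{i-1}(s) ≤ V̂_i(s) ≤ V^{π̂*}(s) ≤ V*(s) for every iteration i and every state s, where π̂* is the greedy policy with respect to Q̂. -/
import Mathlib


open Finset

section

variable {S A : Type*} [Fintype S] [Fintype A] [Nonempty A] [DecidableEq S]

/-- The pessimistic value iterates of conservative value iteration with penalties `b`:
`V̂₀ = 0` and `V̂_{i+1}(s) = max (V̂_i(s)) (max_a Q̂_{i+1}(s,a))` with
`Q̂_{i+1}(s,a) = r̂(s,a) - b_{i+1}(s,a) + γ P̂(s,a)·V̂_i`. -/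
noncomputable def Vhat (rhat : S → A → ℝ) (Phat : S → A → S → ℝ)
    (b : ℕ → S → A → ℝ) (γ : ℝ) : ℕ → S → ℝ
  | 0 => fun _ => 0
  | (i + 1) => fun s => max (Vhat rhat Phat b γ i s)
      (⨆ a : A, (rhat s a - b (i + 1) s a +
        γ * ∑ s', Phat s a s' * Vhat rhat Phat b γ i s'))

/-- `Q̂_{i+1}(s,a) = r̂(s,a) - b_{i+1}(s,a) + γ P̂(s,a)·V̂_i`. -/
noncomputable def Qhat (rhat : S → A → ℝ) (Phat : S → A → S → ℝ)
    (b : ℕ → S → A → ℝ) (γ : ℝ) (i : ℕ) (s : S) (a : A) : ℝ :=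
  rhat s a - b (i + 1) s a + γ * ∑ s', Phat s a s' * Vhat rhat Phat b γ i s'

/-- State distribution at time `t` of the true MDP started at `s0`, following the
deterministic policy `π`. -/
noncomputable def stateDistFrom (P : S → A → S → ℝ) (π : S → A) (s0 : S) : ℕ → S → ℝ
  | 0 => fun s => if s = s0 then 1 else 0
  | (t + 1) => fun s' => ∑ s, stateDistFrom P π s0 t s * P s (π s) s'

/-- The true value `V^π(s0)` of a deterministic policy `π`. -/
noncomputable def Vdet (P : S → A → S → ℝ) (r : S → A → ℝ) (γ : ℝ)
    (π : S → A) (s0 : S) : ℝ :=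
  ∑' t : ℕ, γ ^ t * ∑ s, stateDistFrom P π s0 t s * r s (π s)

/-- The optimal value `V*(s0) = sup_π V^π(s0)`. -/
noncomputable def VstarDet (P : S → A → S → ℝ) (r : S → A → ℝ) (γ : ℝ) (s0 : S) : ℝ :=
  ⨆ π : S → A, Vdet P r γ π s0

lemma dist_nonneg' (P : S → A → S → ℝ) (π : S → A)
    (hP0 : ∀ s a s', 0 ≤ P s a s') (s0 : S) :
    ∀ t s, 0 ≤ stateDistFrom P π s0 t s := by
  intro t
  induction t with
  | zero => intro s; simp only [stateDistFrom]; positivity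
  | succ t ih =>
    intro s
    exact Finset.sum_nonneg fun s1 _ => mul_nonneg (ih s1) (hP0 _ _ _)

lemma dist_sum (P : S → A → S → ℝ) (π : S → A)
    (hP1 : ∀ s a, ∑ s', P s a s' = 1) (s0 : S) :
    ∀ t, ∑ s, stateDistFrom P π s0 t s = 1 := by
  intro t
  induction t with
  | zero => simp [stateDistFrom]
  | succ t ih =>
    simp only [stateDistFrom]
    rw [Finset.sum_comm]
    calc ∑ s, ∑ s', stateDistFrom P π s0 t s * P s (π s) s'
        = ∑ s, stateDistFrom P π s0 t s * ∑ s', P s (π s) s' := by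
          simp [Finset.mul_sum]
      _ = 1 := by simp [hP1, ih]

lemma dist_succ (P : S → A → S → ℝ) (π : S → A) (s0 : S) :
    ∀ t s, stateDistFrom P π s0 (t+1) s
      = ∑ s1, P s0 (π s0) s1 * stateDistFrom P π s1 t s := by
  intro t
  induction t with
  | zero =>
    intro s
    simp [stateDistFrom, Finset.sum_ite_eq']
  | succ t ih =>
    intro s
    show ∑ s', stateDistFrom P π s0 (t+1) s' * P s' (π s') s = _
    calc ∑ s', stateDistFrom P π s0 (t+1) s' * P s' (π s') s
        = ∑ s', (∑ s1, P s0 (π s0) s1 * stateDistFrom P π s1 t s') * P s' (π s') s := by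
          simp_rw [ih]
      _ = ∑ s1, P s0 (π s0) s1 * ∑ s', stateDistFrom P π s1 t s' * P s' (π s') s := by
          simp_rw [Finset.sum_mul, Finset.mul_sum]
          rw [Finset.sum_comm]
          simp [mul_assoc]
      _ = ∑ s1, P s0 (π s0) s1 * stateDistFrom P π s1 (t+1) s := rfl

lemma reward_sum_bounds (P : S → A → S → ℝ) (π : S → A)
    (hP0 : ∀ s a s', 0 ≤ P s a s') (hP1 : ∀ s a, ∑ s', P s a s' = 1)
    (r : S → A → ℝ) (hr0 : ∀ s a, 0 ≤ r s a) (hr1 : ∀ s a, r s a ≤ 1)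
    (s0 : S) (t : ℕ) :
    0 ≤ ∑ s, stateDistFrom P π s0 t s * r s (π s) ∧
      ∑ s, stateDistFrom P π s0 t s * r s (π s) ≤ 1 := by
  constructor
  · exact Finset.sum_nonneg fun s _ =>
      mul_nonneg (dist_nonneg' P π hP0 s0 t s) (hr0 _ _)
  · calc ∑ s, stateDistFrom P π s0 t s * r s (π s)
        ≤ ∑ s, stateDistFrom P π s0 t s := Finset.sum_le_sum fun s _ =>
          mul_le_of_le_one_right (dist_nonneg' P π hP0 s0 t s) (hr1 _ _)
      _ = 1 := dist_sum P π hP1 s0 t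

lemma Vdet_summable (γ : ℝ) (hγ0 : 0 ≤ γ) (hγ1 : γ < 1)
    (P : S → A → S → ℝ) (π : S → A)
    (hP0 : ∀ s a s', 0 ≤ P s a s') (hP1 : ∀ s a, ∑ s', P s a s' = 1)
    (r : S → A → ℝ) (hr0 : ∀ s a, 0 ≤ r s a) (hr1 : ∀ s a, r s a ≤ 1)
    (s0 : S) :
    Summable (fun t : ℕ => γ ^ t * ∑ s, stateDistFrom P π s0 t s * r s (π s)) := by
  apply Summable.of_nonneg_of_le
  · intro t
    exact mul_nonneg (pow_nonneg hγ0 t)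
      (reward_sum_bounds P π hP0 hP1 r hr0 hr1 s0 t).1
  · intro t
    calc γ ^ t * ∑ s, stateDistFrom P π s0 t s * r s (π s)
        ≤ γ ^ t * 1 := mul_le_mul_of_nonneg_left
          (reward_sum_bounds P π hP0 hP1 r hr0 hr1 s0 t).2 (pow_nonneg hγ0 t)
      _ = γ ^ t := mul_one _
  · exact summable_geometric_of_lt_one hγ0 hγ1

lemma Vdet_nonneg' (γ : ℝ) (hγ0 : 0 ≤ γ)
    (P : S → A → S → ℝ) (π : S → A)
    (hP0 : ∀ s a s', 0 ≤ P s a s')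
    (r : S → A → ℝ) (hr0 : ∀ s a, 0 ≤ r s a) (s0 : S) :
    0 ≤ Vdet P r γ π s0 :=
  tsum_nonneg fun t => mul_nonneg (pow_nonneg hγ0 t)
    (Finset.sum_nonneg fun s _ =>
      mul_nonneg (dist_nonneg' P π hP0 s0 t s) (hr0 _ _))

lemma Vdet_le_bound (γ : ℝ) (hγ0 : 0 ≤ γ) (hγ1 : γ < 1)
    (P : S → A → S → ℝ) (π : S → A)
    (hP0 : ∀ s a s', 0 ≤ P s a s') (hP1 : ∀ s a, ∑ s', P s a s' = 1)
    (r : S → A → ℝ) (hr0 : ∀ s a, 0 ≤ r s a) (hr1 : ∀ s a, r s a ≤ 1)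
    (s0 : S) :
    Vdet P r γ π s0 ≤ (1 - γ)⁻¹ := by
  calc Vdet P r γ π s0
      ≤ ∑' t : ℕ, γ ^ t := by
        apply Summable.tsum_le_tsum _ (Vdet_summable γ hγ0 hγ1 P π hP0 hP1 r hr0 hr1 s0)
          (summable_geometric_of_lt_one hγ0 hγ1)
        intro t
        calc γ ^ t * ∑ s, stateDistFrom P π s0 t s * r s (π s)
            ≤ γ ^ t * 1 := mul_le_mul_of_nonneg_left
              (reward_sum_bounds P π hP0 hP1 r hr0 hr1 s0 t).2 (pow_nonneg hγ0 t)
          _ = γ ^ t := mul_one _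
    _ = (1 - γ)⁻¹ := tsum_geometric_of_lt_one hγ0 hγ1

lemma Vdet_bellman (γ : ℝ) (hγ0 : 0 ≤ γ) (hγ1 : γ < 1)
    (P : S → A → S → ℝ) (π : S → A)
    (hP0 : ∀ s a s', 0 ≤ P s a s') (hP1 : ∀ s a, ∑ s', P s a s' = 1)
    (r : S → A → ℝ) (hr0 : ∀ s a, 0 ≤ r s a) (hr1 : ∀ s a, r s a ≤ 1)
    (s0 : S) :
    Vdet P r γ π s0 = r s0 (π s0) + γ * ∑ s1, P s0 (π s0) s1 * Vdet P r γ π s1 := by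
  have hsum := fun s1 => Vdet_summable γ hγ0 hγ1 P π hP0 hP1 r hr0 hr1 s1
  rw [Vdet, Summable.tsum_eq_zero_add (hsum s0)]
  congr 1
  · simp [stateDistFrom, ite_mul]
  · have hrw : ∀ t : ℕ, γ ^ (t + 1) * ∑ s, stateDistFrom P π s0 (t+1) s * r s (π s)
        = ∑ s1, P s0 (π s0) s1 *
          (γ * (γ ^ t * ∑ s, stateDistFrom P π s1 t s * r s (π s))) := by
      intro t
      have h1 : ∑ s, stateDistFrom P π s0 (t+1) s * r s (π s)
          = ∑ s1, P s0 (π s0) s1 * ∑ s, stateDistFrom P π s1 t s * r s (π s) := by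
        simp_rw [dist_succ P π s0 t, Finset.sum_mul, Finset.mul_sum]
        rw [Finset.sum_comm]
        simp [mul_assoc]
      rw [h1, pow_succ, Finset.mul_sum]
      congr 1; ext s1; ring
    simp_rw [hrw]
    rw [Summable.tsum_finsetSum (fun s1 _ => ((hsum s1).mul_left γ).mul_left (P s0 (π s0) s1)),
      Finset.mul_sum]
    congr 1; ext s1
    rw [tsum_mul_left, tsum_mul_left, Vdet]
    ring

/-- Pessimism guarantee for conservative value iteration with Bernstein-type penalties: on the
good event (where the penalty dominates the empirical estimation errors), for every iteration
`i` and state `s`, `V̂_i(s) ≤ V̂_{i+1}(s)`, `V̂_i(s) ≤ V^{π̂*}(s)` and `V^{π̂*}(s) ≤ V*(s)`,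
where `π̂*` is the greedy policy with respect to `Q̂`. -/
theorem stmt_12
    (γ : ℝ) (hγ0 : 0 ≤ γ) (hγ1 : γ < 1)
    (P Phat : S → A → S → ℝ)
    (hP0 : ∀ s a s', 0 ≤ P s a s') (hP1 : ∀ s a, ∑ s', P s a s' = 1)
    (hPhat0 : ∀ s a s', 0 ≤ Phat s a s') (hPhat1 : ∀ s a, ∑ s', Phat s a s' = 1)
    (r rhat : S → A → ℝ) (hr0 : ∀ s a, 0 ≤ r s a) (hr1 : ∀ s a, r s a ≤ 1)
    (hrhat0 : ∀ s a, 0 ≤ rhat s a)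
    (b : ℕ → S → A → ℝ)
    -- good event: the penalties dominate the empirical estimation errors
    (hE : ∀ i s a, (rhat s a - r s a) +
      γ * ∑ s', (Phat s a s' - P s a s') * Vhat rhat Phat b γ i s' ≤ b (i + 1) s a)
    (πhat : S → A)
    -- π̂* is greedy with respect to Q̂
    (hgreedy : ∀ i s a, Qhat rhat Phat b γ i s a ≤ Qhat rhat Phat b γ i s (πhat s)) :
    ∀ i s, Vhat rhat Phat b γ i s ≤ Vhat rhat Phat b γ (i + 1) s ∧
      Vhat rhat Phat b γ i s ≤ Vdet P r γ πhat s ∧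
      Vdet P r γ πhat s ≤ VstarDet P r γ s := by
  have key : ∀ i s, Vhat rhat Phat b γ i s ≤ Vdet P r γ πhat s := by
    intro i
    induction i with
    | zero =>
      intro s
      simp only [Vhat]
      exact Vdet_nonneg' γ hγ0 P πhat hP0 r hr0 s
    | succ i ih =>
      intro s
      show max (Vhat rhat Phat b γ i s) _ ≤ _
      apply max_le (ih s)
      apply ciSup_le
      intro a
      have hq : Qhat rhat Phat b γ i s a ≤ Qhat rhat Phat b γ i s (πhat s) :=
        hgreedy i s a
      have hstep : Qhat rhat Phat b γ i s (πhat s)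
          ≤ r s (πhat s) + γ * ∑ s', P s (πhat s) s' * Vhat rhat Phat b γ i s' := by
        have h := hE i s (πhat s)
        have hsplit : ∑ s', (Phat s (πhat s) s' - P s (πhat s) s') * Vhat rhat Phat b γ i s'
            = (∑ s', Phat s (πhat s) s' * Vhat rhat Phat b γ i s')
              - ∑ s', P s (πhat s) s' * Vhat rhat Phat b γ i s' := by
          rw [← Finset.sum_sub_distrib]
          congr 1; ext s'; ring
        rw [hsplit, mul_sub] at h
        rw [Qhat]
        linarith
      have hmono : ∑ s', P s (πhat s) s' * Vhat rhat Phat b γ i s'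
          ≤ ∑ s', P s (πhat s) s' * Vdet P r γ πhat s' :=
        Finset.sum_le_sum fun s' _ =>
          mul_le_mul_of_nonneg_left (ih s') (hP0 _ _ _)
      calc rhat s a - b (i + 1) s a +
            γ * ∑ s', Phat s a s' * Vhat rhat Phat b γ i s'
          ≤ r s (πhat s) + γ * ∑ s', P s (πhat s) s' * Vhat rhat Phat b γ i s' :=
            le_trans hq hstep
        _ ≤ r s (πhat s) + γ * ∑ s', P s (πhat s) s' * Vdet P r γ πhat s' := by
            have := mul_le_mul_of_nonneg_left hmono hγ0
            linarith
        _ = Vdet P r γ πhat s :=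
            (Vdet_bellman γ hγ0 hγ1 P πhat hP0 hP1 r hr0 hr1 s).symm
  intro i s
  refine ⟨?_, key i s, ?_⟩
  · exact le_max_left _ _
  · apply le_ciSup (f := fun π : S → A => Vdet P r γ π s) _ πhat
    refine ⟨(1 - γ)⁻¹, ?_⟩
    rintro x ⟨π, rfl⟩
    exact Vdet_le_bound γ hγ0 hγ1 P π hP0 hP1 r hr0 hr1 s


end
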